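/- There exist constants c₁, c₂ > 0 depending only on μ > -1 such that for all z > 0: c₁ · z^μ e^z / (1+z)^{μ+1/2} ≤ I_μ(z) ≤ c₂ · z^μ e^z / (1+z)^{μ+1/2}. -/

import Mathlib

open Real Filter Topology


lemma exp_tsum (x : ℝ) : Real.exp x = ∑' n : ℕ, x ^ n / n.factorial := by
  rw [Real.exp_eq_exp_ℝ, NormedSpace.exp_eq_tsum_div]

/-- Extract two-sided bounds from a positive sequence converging to a positive limit. -/
lemma bounds_of_tendsto {f : ℕ → ℝ} {L : ℝ} (hf : ∀ n, 0 < f n) (hL : 0 < L)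
    (h : Tendsto f atTop (𝓝 L)) :
    ∃ c C : ℝ, 0 < c ∧ ∀ n, c ≤ f n ∧ f n ≤ C := by
  obtain ⟨N, hN⟩ := Metric.tendsto_atTop.mp h (L / 2) (by positivity)
  have hne : (Finset.range (N + 1)).Nonempty := ⟨0, by simp⟩
  refine ⟨min (L / 2) ((Finset.range (N + 1)).inf' hne f),
    max (2 * L) ((Finset.range (N + 1)).sup' hne f), ?_, fun n => ?_⟩
  · exact lt_min (by positivity) ((Finset.lt_inf'_iff hne).mpr fun i _ => hf i)
  rcases le_or_gt n N with hn | hn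
  · exact ⟨le_trans (min_le_right _ _) (Finset.inf'_le f (by simp [Finset.mem_range]; omega)),
      le_trans (Finset.le_sup' f (by simp [Finset.mem_range]; omega)) (le_max_right _ _)⟩
  · have := hN n hn.le
    rw [Real.dist_eq, abs_sub_lt_iff] at this
    constructor
    · refine le_trans (min_le_left _ _) ?_; linarith [this.2]
    · refine le_trans ?_ (le_max_left _ _); linarith [this.1]

/-- Polynomial growth beaten by exponential. -/
lemma rpow_le_mul_exp (r β : ℝ) (hβ : 0 < β) :
    ∃ C : ℝ, 0 < C ∧ ∀ y : ℝ, 1 ≤ y → y ^ r ≤ C * Real.exp (β * y) := by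
  rcases le_or_gt r 0 with hr | hr
  · refine ⟨1, one_pos, fun y hy => ?_⟩
    rw [one_mul]
    exact le_trans (Real.rpow_le_one_of_one_le_of_nonpos hy hr)
      (Real.one_le_exp (by positivity))
  · refine ⟨Real.exp (r ^ 2 / β), Real.exp_pos _, fun y hy => ?_⟩
    have hy0 : 0 < y := lt_of_lt_of_le one_pos hy
    have hlog : Real.log y ≤ 2 * Real.sqrt y := by
      have h1 : Real.log (Real.sqrt y) = Real.log y / 2 := Real.log_sqrt hy0.le
      have h2 : Real.log (Real.sqrt y) ≤ Real.sqrt y - 1 :=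
        Real.log_le_sub_one_of_pos (Real.sqrt_pos.mpr hy0)
      nlinarith [Real.sqrt_nonneg y]
    have h6 : Real.sqrt y ^ 2 = y := Real.sq_sqrt hy0.le
    have h9 : 0 ≤ β ^ 2 * y + r ^ 2 - 2 * r * β * Real.sqrt y := by
      nlinarith [sq_nonneg (β * Real.sqrt y - r)]
    have h10 : β * y + r ^ 2 / β - 2 * r * Real.sqrt y
        = (β ^ 2 * y + r ^ 2 - 2 * r * β * Real.sqrt y) / β := by field_simp
    have h11 : 2 * r * Real.sqrt y ≤ β * y + r ^ 2 / β := by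
      have := div_nonneg h9 hβ.le
      linarith
    have key : r * Real.log y ≤ β * y + r ^ 2 / β := by
      have := mul_le_mul_of_nonneg_left hlog hr.le
      linarith
    calc y ^ r = Real.exp (r * Real.log y) := by
          rw [Real.rpow_def_of_pos hy0, mul_comm]
      _ ≤ Real.exp (β * y + r ^ 2 / β) := Real.exp_le_exp.mpr key
      _ = Real.exp (r ^ 2 / β) * Real.exp (β * y) := by rw [← Real.exp_add]; ring_nf

/-- comparability of rpow for comparable bases. -/
lemma rpow_ratio_le {r M a b : ℝ} (hM : 1 ≤ M) (ha : 0 < a) (hb : 0 < b)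
    (h1 : b ≤ M * a) (h2 : a ≤ M * b) : b ^ r ≤ M ^ |r| * a ^ r := by
  have hM0 : (0:ℝ) < M := lt_of_lt_of_le one_pos hM
  have key : (b / a) ^ r ≤ M ^ |r| := by
    have hlog : |Real.log (b / a)| ≤ Real.log M := by
      rw [abs_le]
      constructor
      · have h2' : a / b ≤ M := by rw [div_le_iff₀ hb]; linarith [h2]
        have := Real.log_le_log (by positivity) h2'
        rw [Real.log_div ha.ne' hb.ne'] at this
        rw [Real.log_div hb.ne' ha.ne']
        linarith
      · have h1' : b / a ≤ M := by rw [div_le_iff₀ ha]; linarith [h1]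
        exact Real.log_le_log (by positivity) h1'
    have h3 : r * Real.log (b / a) ≤ |r| * Real.log M := by
      calc r * Real.log (b / a) ≤ |r * Real.log (b / a)| := le_abs_self _
        _ = |r| * |Real.log (b / a)| := abs_mul _ _
        _ ≤ |r| * Real.log M := mul_le_mul_of_nonneg_left hlog (abs_nonneg r)
    calc (b / a) ^ r = Real.exp (r * Real.log (b / a)) := by
          rw [Real.rpow_def_of_pos (by positivity), mul_comm]
      _ ≤ Real.exp (|r| * Real.log M) := Real.exp_le_exp.mpr h3
      _ = M ^ |r| := by rw [Real.rpow_def_of_pos hM0, mul_comm]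
  have hba : b ^ r = (b / a) ^ r * a ^ r := by
    rw [Real.div_rpow hb.le ha.le]
    field_simp
  rw [hba]
  exact mul_le_mul_of_nonneg_right key (Real.rpow_pos_of_pos ha r).le
lemma two_mul_inj : Function.Injective (fun k : ℕ => 2 * k) :=
  fun a b h => by simpa using h

lemma summable_even (x : ℝ) : Summable (fun k : ℕ => x ^ (2*k) / (2*k).factorial) :=
  (Real.summable_pow_div_factorial x).comp_injective two_mul_inj

lemma even_tsum_le_exp {x : ℝ} (hx : 0 ≤ x) :
    ∑' k : ℕ, x ^ (2*k) / (2*k).factorial ≤ Real.exp x := by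
  rw [exp_tsum]
  exact Summable.tsum_le_tsum_of_inj (fun k => 2*k) two_mul_inj
    (fun c _ => by positivity) (fun k => le_rfl)
    (summable_even x) (Real.summable_pow_div_factorial x)

lemma rpow_fact_bound (q : ℝ) : ∃ C : ℝ, 0 < C ∧ ∀ k : ℕ,
    ((k:ℝ)+1) ^ q ≤ C * (9/8 : ℝ) ^ (2*k) := by
  obtain ⟨C, hC, hCb⟩ := rpow_le_mul_exp q (Real.log (9/8)) (Real.log_pos (by norm_num))
  refine ⟨C * (9/8), by positivity, fun k => ?_⟩
  have h1 := hCb ((k:ℝ)+1) (by linarith [Nat.cast_nonneg (α := ℝ) k])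
  have h2 : Real.exp (Real.log (9/8) * ((k:ℝ)+1)) = (9/8 : ℝ) ^ (k+1) := by
    rw [show ((k:ℝ)+1) = ((k+1 : ℕ) : ℝ) by push_cast; ring, mul_comm,
      Real.exp_nat_mul, Real.exp_log (by norm_num)]
  have h3 : (9/8 : ℝ) ^ (k+1) ≤ (9/8 : ℝ) ^ (2*k+1) :=
    pow_le_pow_right₀ (by norm_num) (by omega)
  calc ((k:ℝ)+1) ^ q ≤ C * Real.exp (Real.log (9/8) * ((k:ℝ)+1)) := h1
    _ = C * (9/8 : ℝ) ^ (k+1) := by rw [h2]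
    _ ≤ C * (9/8 : ℝ) ^ (2*k+1) := mul_le_mul_of_nonneg_left h3 hC.le
    _ = C * (9/8) * (9/8 : ℝ) ^ (2*k) := by ring

lemma summable_rpow_even {x : ℝ} (q : ℝ) (hx : 0 ≤ x) :
    Summable (fun k : ℕ => x ^ (2*k) * ((k:ℝ)+1) ^ q / (2*k).factorial) := by
  obtain ⟨C, hC, hCb⟩ := rpow_fact_bound q
  apply Summable.of_nonneg_of_le (fun k => ?_) (fun k => ?_)
    ((summable_even (9/8 * x)).mul_left C)
  · have : (0:ℝ) < ((k:ℝ)+1) ^ q := Real.rpow_pos_of_pos (by positivity) q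
    positivity
  · calc x ^ (2*k) * ((k:ℝ)+1) ^ q / (2*k).factorial
        ≤ x ^ (2*k) * (C * (9/8 : ℝ) ^ (2*k)) / (2*k).factorial := by
          apply div_le_div_of_nonneg_right ?_ (by positivity)
          exact mul_le_mul_of_nonneg_left (hCb k) (by positivity)
      _ = C * ((9/8 * x) ^ (2*k) / (2*k).factorial) := by rw [mul_pow]; ring

lemma factorial_upper : ∃ A : ℝ, 0 < A ∧ ∀ n : ℕ, 1 ≤ n →
    (n.factorial : ℝ) ≤ A * Real.sqrt n * n ^ n / Real.exp n := by
  obtain ⟨c, C, hc, hb⟩ := bounds_of_tendsto (f := fun m => Stirling.stirlingSeq (m+1))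
    (fun m => Stirling.stirlingSeq'_pos m) (Real.sqrt_pos.mpr Real.pi_pos)
    (Stirling.tendsto_stirlingSeq_sqrt_pi.comp (tendsto_add_atTop_nat 1))
  have hC : 0 < C := lt_of_lt_of_le hc ((hb 0).1.trans (hb 0).2)
  refine ⟨C * Real.sqrt 2, by positivity, fun n hn => ?_⟩
  obtain ⟨m, rfl⟩ := Nat.exists_eq_add_of_le hn
  have h1 : Stirling.stirlingSeq (1 + m) ≤ C := by
    have := (hb m).2
    simpa [Nat.add_comm] using this
  set n := 1 + m with hn_def
  have hn0 : (0:ℝ) < (n:ℝ) := by positivity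
  have hpos : (0:ℝ) < Real.sqrt (2 * n) * ((n : ℝ) / Real.exp 1) ^ n := by positivity
  rw [Stirling.stirlingSeq, div_le_iff₀ hpos] at h1
  calc (n.factorial : ℝ) ≤ C * (Real.sqrt (2 * n) * ((n:ℝ) / Real.exp 1) ^ n) := h1
    _ = C * Real.sqrt 2 * Real.sqrt n * (n:ℝ) ^ n / Real.exp n := by
        rw [show ((2:ℝ) * n) = 2 * (n:ℝ) by push_cast; ring,
          Real.sqrt_mul (by norm_num), div_pow, ← Real.exp_one_pow]
        ring
lemma gamma_ratio_bounds {μ : ℝ} (hμ : -1 < μ) : ∃ g₁ g₂ : ℝ, 0 < g₁ ∧ 0 < g₂ ∧ ∀ k : ℕ,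
    g₁ * (k.factorial * ((k:ℝ)+1) ^ μ) ≤ Real.Gamma ((k:ℝ) + μ + 1) ∧
    Real.Gamma ((k:ℝ) + μ + 1) ≤ g₂ * (k.factorial * ((k:ℝ)+1) ^ μ) := by
  set s : ℝ := μ + 1 with hs_def
  have hs : 0 < s := by simp [hs_def]; linarith
  -- Product formula for Gamma
  have prodid : ∀ n : ℕ, Real.Gamma ((n:ℝ) + s + 1)
      = Real.Gamma s * ∏ j ∈ Finset.range (n+1), (s + j) := by
    intro n
    induction n with
    | zero => simp [Real.Gamma_add_one hs.ne', mul_comm]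
    | succ n ih =>
      have h1 : ((n+1 : ℕ):ℝ) + s + 1 = ((n:ℝ) + s + 1) + 1 := by push_cast; ring
      rw [h1, Real.Gamma_add_one (by positivity), ih]
      conv_rhs => rw [Finset.prod_range_succ]
      push_cast
      ring
  have hΓs : Real.Gamma s ≠ 0 := (Real.Gamma_pos_of_pos hs).ne'
  -- Euler limit
  have hF : Tendsto (fun n : ℕ => (n:ℝ) ^ s * n.factorial / Real.Gamma ((n:ℝ) + s + 1))
      atTop (𝓝 1) := by
    have h0 := (Real.GammaSeq_tendsto_Gamma s).div_const (Real.Gamma s)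
    rw [div_self hΓs] at h0
    refine h0.congr fun n => ?_
    have hP : (0:ℝ) < ∏ j ∈ Finset.range (n+1), (s + j) :=
      Finset.prod_pos fun j _ => by positivity
    rw [Real.GammaSeq, prodid n]
    rw [mul_comm (Real.Gamma s)]
    rw [div_div]
  have hfpos : ∀ k : ℕ, 0 < Real.Gamma ((k:ℝ) + μ + 1) / (k.factorial * ((k:ℝ)+1) ^ μ) := by
    intro k
    have h1 : (0:ℝ) < Real.Gamma ((k:ℝ) + μ + 1) := Real.Gamma_pos_of_pos
      (by have := Nat.cast_nonneg (α := ℝ) k; linarith)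
    have h2 : (0:ℝ) < ((k:ℝ)+1) ^ μ := Real.rpow_pos_of_pos (by positivity) μ
    have h3 : (0:ℝ) < (k.factorial : ℝ) := by positivity
    positivity
  -- limit of the normalized ratio
  have htend : Tendsto (fun k : ℕ =>
      Real.Gamma ((k:ℝ) + μ + 1) / (k.factorial * ((k:ℝ)+1) ^ μ)) atTop (𝓝 1) := by
    have hG1 : Tendsto (fun k : ℕ => ((k:ℝ) / ((k:ℝ)+1)) ^ s) atTop (𝓝 1) := by
      have hb : Tendsto (fun k : ℕ => (k:ℝ) / ((k:ℝ)+1)) atTop (𝓝 1) := by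
        have := tendsto_one_div_add_atTop_nhds_zero_nat (𝕜 := ℝ)
        have h2 := tendsto_const_nhds (x := (1:ℝ)) (f := atTop (α := ℕ)) |>.sub this
        rw [sub_zero] at h2
        refine h2.congr fun k => ?_
        have : ((k:ℝ)+1) ≠ 0 := by positivity
        field_simp
        ring
      simpa using hb.rpow_const (Or.inl one_ne_zero)
    have hG2 : Tendsto (fun k : ℕ => ((k:ℝ)+1) / ((k:ℝ)+s)) atTop (𝓝 1) := by
      have hks : Tendsto (fun k : ℕ => (k:ℝ)+s) atTop atTop :=
        tendsto_atTop_add_const_right atTop s tendsto_natCast_atTop_atTop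
      have h1 : Tendsto (fun k : ℕ => 1 + (1-s) * ((k:ℝ)+s)⁻¹) atTop (𝓝 1) := by
        have := (tendsto_inv_atTop_zero.comp hks).const_mul (1-s)
        have h2 := tendsto_const_nhds (x := (1:ℝ)) (f := atTop (α := ℕ)) |>.add this
        simpa using h2
      refine h1.congr fun k => ?_
      have hk0 : (k:ℝ) + s ≠ 0 := by positivity
      field_simp
      ring
    have hFinv : Tendsto (fun n : ℕ =>
        ((n:ℝ) ^ s * n.factorial / Real.Gamma ((n:ℝ) + s + 1))⁻¹) atTop (𝓝 1) := by
      simpa using hF.inv₀ one_ne_zero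
    have hprod := (hFinv.mul hG1).mul hG2
    rw [show (1:ℝ) * 1 * 1 = 1 by norm_num] at hprod
    apply hprod.congr'
    filter_upwards [eventually_ge_atTop 1] with k hk
    -- pointwise identity for k ≥ 1
    have hk0 : (0:ℝ) < (k:ℝ) := by exact_mod_cast hk
    have hk1 : (0:ℝ) < (k:ℝ) + 1 := by positivity
    have hks0 : (0:ℝ) < (k:ℝ) + s := by positivity
    have hΓ1 : Real.Gamma ((k:ℝ) + s + 1) = ((k:ℝ) + s) * Real.Gamma ((k:ℝ) + s) := by
      rw [Real.Gamma_add_one hks0.ne']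
    have hkμ : (k:ℝ) + μ + 1 = (k:ℝ) + s := by rw [hs_def]; ring
    have e1 : ((k:ℝ)+1) ^ s = ((k:ℝ)+1) ^ μ * ((k:ℝ)+1) := by
      rw [hs_def, Real.rpow_add_one hk1.ne']
    have hrp1 : (0:ℝ) < (k:ℝ) ^ s := Real.rpow_pos_of_pos hk0 s
    have hrp2 : (0:ℝ) < ((k:ℝ)+1) ^ μ := Real.rpow_pos_of_pos hk1 μ
    have hΓpos : (0:ℝ) < Real.Gamma ((k:ℝ) + s) := Real.Gamma_pos_of_pos (by positivity)
    have hfac : (0:ℝ) < (k.factorial : ℝ) := by positivity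
    rw [Real.div_rpow hk0.le hk1.le, hkμ, hΓ1, e1]
    field_simp
  obtain ⟨c, C, hc, hb⟩ := bounds_of_tendsto hfpos one_pos htend
  have hC : 0 < C := lt_of_lt_of_le hc ((hb 0).1.trans (hb 0).2)
  refine ⟨c, C, hc, hC, fun k => ?_⟩
  have hden : (0:ℝ) < (k.factorial : ℝ) * ((k:ℝ)+1) ^ μ := by
    have h2 : (0:ℝ) < ((k:ℝ)+1) ^ μ := Real.rpow_pos_of_pos (by positivity) μ
    have h3 : (0:ℝ) < (k.factorial : ℝ) := by positivity
    positivity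
  constructor
  · have := (hb k).1
    rw [le_div_iff₀ hden] at this
    linarith
  · have := (hb k).2
    rw [div_le_iff₀ hden] at this
    linarith
lemma dup_formula (k : ℕ) : ((2*k).factorial : ℝ)
    = Real.Gamma ((k:ℝ) + 1/2) * k.factorial * 4 ^ k / Real.sqrt π := by
  have h := Real.Gamma_mul_Gamma_add_half ((k:ℝ) + 1/2)
  have h1 : ((k:ℝ) + 1/2) + 1/2 = (k:ℝ) + 1 := by ring
  have h2 : Real.Gamma ((k:ℝ) + 1) = k.factorial := Real.Gamma_nat_eq_factorial k
  have h3 : (2:ℝ) * ((k:ℝ) + 1/2) = ((2*k : ℕ):ℝ) + 1 := by push_cast; ring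
  have h4 : Real.Gamma (((2*k : ℕ):ℝ) + 1) = (2*k).factorial :=
    Real.Gamma_nat_eq_factorial (2*k)
  have h5 : (2:ℝ) ^ ((1:ℝ) - 2 * ((k:ℝ) + 1/2)) = ((4:ℝ) ^ k)⁻¹ := by
    have e1 : (1:ℝ) - 2 * ((k:ℝ) + 1/2) = -(((2*k : ℕ):ℝ)) := by push_cast; ring
    rw [e1, Real.rpow_neg (by norm_num), Real.rpow_natCast]
    congr 1
    rw [pow_mul]
    norm_num
  rw [h1, h2, h5, h3, h4] at h
  have hsqrtπ : (0:ℝ) < Real.sqrt π := Real.sqrt_pos.mpr Real.pi_pos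
  have h4k : (0:ℝ) < (4:ℝ)^k := by positivity
  field_simp at h ⊢
  linarith [h]

lemma term_compare {μ : ℝ} (hμ : -1 < μ) : ∃ r₁ r₂ : ℝ, 0 < r₁ ∧ 0 < r₂ ∧ ∀ k : ℕ,
    r₁ * ((4:ℝ)^k * ((k:ℝ)+1) ^ (-(μ+1/2)) / (2*k).factorial)
      ≤ ((k.factorial : ℝ) * Real.Gamma ((k:ℝ)+μ+1))⁻¹ ∧
    ((k.factorial : ℝ) * Real.Gamma ((k:ℝ)+μ+1))⁻¹
      ≤ r₂ * ((4:ℝ)^k * ((k:ℝ)+1) ^ (-(μ+1/2)) / (2*k).factorial) := by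
  obtain ⟨g₁, g₂, hg₁, hg₂, hg⟩ := gamma_ratio_bounds hμ
  obtain ⟨h₁, h₂, hh₁, hh₂, hh⟩ := gamma_ratio_bounds (μ := -(1/2)) (by norm_num)
  have hsqrtπ : (0:ℝ) < Real.sqrt π := Real.sqrt_pos.mpr Real.pi_pos
  refine ⟨h₁ / (Real.sqrt π * g₂), h₂ / (Real.sqrt π * g₁), by positivity, by positivity,
    fun k => ?_⟩
  have hk1 : (0:ℝ) < (k:ℝ) + 1 := by positivity
  set F : ℝ := (k.factorial : ℝ) with hF_def
  have hF : (0:ℝ) < F := by positivity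
  set G : ℝ := Real.Gamma ((k:ℝ) + μ + 1) with hG_def
  have hG : (0:ℝ) < G := Real.Gamma_pos_of_pos (by have := Nat.cast_nonneg (α := ℝ) k; linarith)
  set H : ℝ := Real.Gamma ((k:ℝ) + 1/2) with hH_def
  have hH : (0:ℝ) < H := Real.Gamma_pos_of_pos (by positivity)
  set P : ℝ := ((k:ℝ)+1) ^ μ with hP_def
  have hP : (0:ℝ) < P := Real.rpow_pos_of_pos hk1 μ
  set Q : ℝ := ((k:ℝ)+1) ^ (-(1/2) : ℝ) with hQ_def
  have hQ : (0:ℝ) < Q := Real.rpow_pos_of_pos hk1 _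
  set R : ℝ := ((k:ℝ)+1) ^ (-(μ+1/2)) with hR_def
  have hR : (0:ℝ) < R := Real.rpow_pos_of_pos hk1 _
  have hRP : R * P = Q := by
    rw [hR_def, hP_def, hQ_def, ← Real.rpow_add hk1]
    norm_num
  have hgk := hg k
  have hhk := hh k
  rw [show (k:ℝ) + -(1/2) + 1 = (k:ℝ) + 1/2 by ring] at hhk
  have hGl : g₁ * (F * P) ≤ G := hgk.1
  have hGu : G ≤ g₂ * (F * P) := hgk.2
  have hHl : h₁ * (F * Q) ≤ H := hhk.1
  have hHu : H ≤ h₂ * (F * Q) := hhk.2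
  have hdup := dup_formula k
  have h4k : (0:ℝ) < (4:ℝ)^k := by positivity
  have key : (4:ℝ)^k * R / (2*k).factorial = Real.sqrt π * R / (H * F) := by
    rw [hdup, ← hH_def, ← hF_def]
    field_simp
  rw [key]
  have hInv : (F * G)⁻¹ = 1 / (F * G) := by rw [one_div]
  constructor
  · -- lower: h₁/(√π g₂) * (√π R/(H F)) ≤ (F G)⁻¹
    rw [hInv, show h₁ / (Real.sqrt π * g₂) * (Real.sqrt π * R / (H * F))
        = (h₁ * R / g₂) / (H * F) by field_simp,
      div_le_div_iff₀ (by positivity) (by positivity)]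
    -- goal : h₁ * R / g₂ * (F * G) ≤ 1 * (H * F)
    have c1 : h₁ * R / g₂ * (F * G) ≤ h₁ * R / g₂ * (F * (g₂ * (F * P))) := by
      apply mul_le_mul_of_nonneg_left (mul_le_mul_of_nonneg_left hGu hF.le) (by positivity)
    have c2 : h₁ * R / g₂ * (F * (g₂ * (F * P))) = h₁ * (F * Q) * F := by
      field_simp
      rw [← hRP]
    calc h₁ * R / g₂ * (F * G) ≤ h₁ * (F * Q) * F := by rw [← c2]; exact c1
      _ ≤ H * F := mul_le_mul_of_nonneg_right hHl hF.le
      _ = 1 * (H * F) := by ring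
  · rw [hInv, show h₂ / (Real.sqrt π * g₁) * (Real.sqrt π * R / (H * F))
        = (h₂ * R / g₁) / (H * F) by field_simp,
      div_le_div_iff₀ (by positivity) (by positivity)]
    -- goal : 1 * (H * F) ≤ h₂ * R / g₁ * (F * G)
    have c1 : h₂ * R / g₁ * (F * (g₁ * (F * P))) ≤ h₂ * R / g₁ * (F * G) := by
      apply mul_le_mul_of_nonneg_left (mul_le_mul_of_nonneg_left hGl hF.le) (by positivity)
    have c2 : h₂ * R / g₁ * (F * (g₁ * (F * P))) = h₂ * (F * Q) * F := by
      field_simp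
      rw [← hRP]
    calc 1 * (H * F) = H * F := by ring
      _ ≤ h₂ * (F * Q) * F := mul_le_mul_of_nonneg_right hHu hF.le
      _ = h₂ * R / g₁ * (F * (g₁ * (F * P))) := by rw [c2]
      _ ≤ h₂ * R / g₁ * (F * G) := c1
lemma shifted_even_tsum_le {x : ℝ} (hx : 0 ≤ x) (K : ℕ) :
    ∑' j : ℕ, x ^ (2*(j+K)) / (2*(j+K)).factorial ≤ Real.exp x := by
  rw [exp_tsum]
  exact Summable.tsum_le_tsum_of_inj (fun j => 2*(j+K))
    (fun a b h => by simpa using h)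
    (fun c _ => by positivity) (fun j => le_rfl)
    ((Real.summable_pow_div_factorial x).comp_injective (fun a b h => by simpa using h))
    (Real.summable_pow_div_factorial x)

lemma summable_shifted (x q : ℝ) (hx : 0 ≤ x) (K : ℕ) :
    Summable (fun j : ℕ => x ^ (2*(j+K)) * (((j+K : ℕ):ℝ)+1) ^ q / (2*(j+K)).factorial) :=
  (summable_rpow_even q hx).comp_injective (add_left_injective K)

lemma summable_even_shifted (x : ℝ) (K : ℕ) :
    Summable (fun j : ℕ => x ^ (2*(j+K)) / (2*(j+K)).factorial) :=
  (summable_even x).comp_injective (add_left_injective K)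

lemma upper_est (r : ℝ) : ∃ C : ℝ, 0 < C ∧ ∀ z : ℝ, 1 ≤ z →
    ∑' k : ℕ, z ^ (2*k) * ((k:ℝ)+1) ^ r / (2*k).factorial
      ≤ C * (Real.exp z * (1+z) ^ r) := by
  obtain ⟨C₀, hC₀, hC₀b⟩ := rpow_fact_bound r
  obtain ⟨C₁, hC₁, hC₁b⟩ := rpow_le_mul_exp (-r) (1/8) (by norm_num)
  rcases le_or_gt 0 r with hr | hr
  · -- case r ≥ 0
    refine ⟨(9:ℝ) ^ r + C₀, by positivity, fun z hz => ?_⟩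
    have hz0 : (0:ℝ) < z := lt_of_lt_of_le one_pos hz
    have h1z : (0:ℝ) < 1 + z := by linarith
    have hsum := summable_rpow_even (x := z) r hz0.le
    set K := ⌈(8:ℝ)*z⌉₊ with hK_def
    rw [← hsum.sum_add_tsum_nat_add K]
    have head : ∑ k ∈ Finset.range K, z ^ (2*k) * ((k:ℝ)+1) ^ r / (2*k).factorial
        ≤ (9:ℝ) ^ r * (1+z) ^ r * Real.exp z := by
      have hterm : ∀ k ∈ Finset.range K,
          z ^ (2*k) * ((k:ℝ)+1) ^ r / (2*k).factorial
          ≤ (9:ℝ) ^ r * (1+z) ^ r * (z ^ (2*k) / (2*k).factorial) := by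
        intro k hk
        rw [Finset.mem_range] at hk
        have hk1 : ((k:ℝ)+1) ≤ 9 * (1 + z) := by
          have h2 : ((k:ℝ)+1) ≤ K := by exact_mod_cast hk
          have h3 : (K:ℝ) < 8*z + 1 := Nat.ceil_lt_add_one (by positivity)
          linarith
        have h4 : ((k:ℝ)+1) ^ r ≤ (9 * (1+z)) ^ r :=
          Real.rpow_le_rpow (by positivity) hk1 hr
        rw [Real.mul_rpow (by norm_num) h1z.le] at h4
        calc z ^ (2*k) * ((k:ℝ)+1) ^ r / (2*k).factorial
            ≤ z ^ (2*k) * ((9:ℝ) ^ r * (1+z) ^ r) / (2*k).factorial := by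
              apply div_le_div_of_nonneg_right ?_ (by positivity)
              exact mul_le_mul_of_nonneg_left h4 (by positivity)
          _ = (9:ℝ) ^ r * (1+z) ^ r * (z ^ (2*k) / (2*k).factorial) := by ring
      calc ∑ k ∈ Finset.range K, z ^ (2*k) * ((k:ℝ)+1) ^ r / (2*k).factorial
          ≤ ∑ k ∈ Finset.range K, (9:ℝ) ^ r * (1+z) ^ r * (z ^ (2*k) / (2*k).factorial) :=
            Finset.sum_le_sum hterm
        _ = (9:ℝ) ^ r * (1+z) ^ r * ∑ k ∈ Finset.range K, z ^ (2*k) / (2*k).factorial := by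
            rw [Finset.mul_sum]
        _ ≤ (9:ℝ) ^ r * (1+z) ^ r * Real.exp z := by
            apply mul_le_mul_of_nonneg_left ?_ (by positivity)
            exact le_trans (Summable.sum_le_tsum (Finset.range K) (fun k _ => by positivity)
              (summable_even z)) (even_tsum_le_exp hz0.le)
    have tail : ∑' j : ℕ, z ^ (2*(j+K)) * (((j+K : ℕ):ℝ)+1) ^ r / (2*(j+K)).factorial
        ≤ C₀ * Real.exp z := by
      have hterm : ∀ j : ℕ,
          z ^ (2*(j+K)) * (((j+K : ℕ):ℝ)+1) ^ r / (2*(j+K)).factorial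
          ≤ C₀ * ((1:ℝ)/2) ^ ((16:ℝ)*z)
              * ((9/4*z) ^ (2*(j+K)) / (2*(j+K)).factorial) := by
        intro j
        have h5 : (((j+K : ℕ):ℝ)+1) ^ r ≤ C₀ * (9/8 : ℝ) ^ (2*(j+K)) := hC₀b (j+K)
        have h6 : ((1:ℝ)/2) ^ (((2*(j+K) : ℕ)):ℝ) ≤ ((1:ℝ)/2) ^ ((16:ℝ)*z) := by
          apply Real.rpow_le_rpow_of_exponent_ge (by norm_num) (by norm_num)
          have h7 : (8:ℝ)*z ≤ K := Nat.le_ceil _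
          have h8 : (K:ℝ) ≤ ((j+K : ℕ):ℝ) := by exact_mod_cast Nat.le_add_left K j
          push_cast at h8 ⊢
          linarith
        rw [Real.rpow_natCast] at h6
        have e1 : (9/4*z : ℝ) ^ (2*(j+K)) = (9/8 : ℝ) ^ (2*(j+K)) * z ^ (2*(j+K))
            * ((2:ℝ)) ^ (2*(j+K)) := by
          rw [← mul_pow, ← mul_pow]; congr 1; ring
        have e2 : ((1:ℝ)/2) ^ (2*(j+K)) * (2:ℝ) ^ (2*(j+K)) = 1 := by
          rw [← mul_pow]; norm_num
        calc z ^ (2*(j+K)) * (((j+K : ℕ):ℝ)+1) ^ r / (2*(j+K)).factorial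
            ≤ z ^ (2*(j+K)) * (C₀ * (9/8 : ℝ) ^ (2*(j+K))) / (2*(j+K)).factorial := by
              apply div_le_div_of_nonneg_right ?_ (by positivity)
              exact mul_le_mul_of_nonneg_left h5 (by positivity)
          _ = C₀ * ((1:ℝ)/2) ^ (2*(j+K))
              * ((9/4*z) ^ (2*(j+K)) / (2*(j+K)).factorial) := by
              rw [e1]
              field_simp
              linear_combination -e2
          _ ≤ C₀ * ((1:ℝ)/2) ^ ((16:ℝ)*z)
              * ((9/4*z) ^ (2*(j+K)) / (2*(j+K)).factorial) := by
              apply mul_le_mul_of_nonneg_right ?_ (by positivity)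
              exact mul_le_mul_of_nonneg_left h6 hC₀.le
      have hhalf : ((1:ℝ)/2) ^ ((16:ℝ)*z) * Real.exp (9/4*z) ≤ Real.exp z := by
        rw [Real.rpow_def_of_pos (by norm_num), ← Real.exp_add, Real.exp_le_exp]
        have hl2 := Real.log_two_gt_d9
        have hlhalf : Real.log (1/2) = - Real.log 2 := by rw [one_div, Real.log_inv]
        rw [hlhalf]
        nlinarith
      calc ∑' j : ℕ, z ^ (2*(j+K)) * (((j+K : ℕ):ℝ)+1) ^ r / (2*(j+K)).factorial
          ≤ ∑' j : ℕ, C₀ * ((1:ℝ)/2) ^ ((16:ℝ)*z)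
              * ((9/4*z) ^ (2*(j+K)) / (2*(j+K)).factorial) :=
            Summable.tsum_le_tsum hterm (summable_shifted z r hz0.le K)
              ((summable_even_shifted (9/4*z) K).mul_left _)
        _ = C₀ * ((1:ℝ)/2) ^ ((16:ℝ)*z)
              * ∑' j : ℕ, (9/4*z) ^ (2*(j+K)) / (2*(j+K)).factorial := tsum_mul_left
        _ ≤ C₀ * ((1:ℝ)/2) ^ ((16:ℝ)*z) * Real.exp (9/4*z) := by
            apply mul_le_mul_of_nonneg_left (shifted_even_tsum_le (by positivity) K) (by positivity)
        _ = C₀ * (((1:ℝ)/2) ^ ((16:ℝ)*z) * Real.exp (9/4*z)) := by ring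
        _ ≤ C₀ * Real.exp z := mul_le_mul_of_nonneg_left hhalf hC₀.le
    have hfin : C₀ * Real.exp z ≤ C₀ * Real.exp z * (1+z) ^ r := by
      nth_rewrite 1 [← mul_one (C₀ * Real.exp z)]
      exact mul_le_mul_of_nonneg_left (Real.one_le_rpow (by linarith) hr) (by positivity)
    calc _ ≤ (9:ℝ) ^ r * (1+z) ^ r * Real.exp z + C₀ * Real.exp z :=
          add_le_add head tail
      _ ≤ (9:ℝ) ^ r * (1+z) ^ r * Real.exp z + C₀ * Real.exp z * (1+z) ^ r :=
          add_le_add_right hfin _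
      _ = ((9:ℝ) ^ r + C₀) * (Real.exp z * (1+z) ^ r) := by ring
  · -- case r < 0
    refine ⟨C₁ * Real.exp (1/8) + (8:ℝ) ^ (-r), by positivity, fun z hz => ?_⟩
    have hz0 : (0:ℝ) < z := lt_of_lt_of_le one_pos hz
    have h1z : (0:ℝ) < 1 + z := by linarith
    have hrp : (0:ℝ) ≤ (1+z) ^ r := (Real.rpow_pos_of_pos h1z r).le
    have hsum := summable_rpow_even (x := z) r hz0.le
    set K := ⌈z/4⌉₊ with hK_def
    rw [← hsum.sum_add_tsum_nat_add K]
    have head : ∑ k ∈ Finset.range K, z ^ (2*k) * ((k:ℝ)+1) ^ r / (2*k).factorial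
        ≤ C₁ * Real.exp (1/8) * Real.exp z * (1+z) ^ r := by
      have hX : ∑ k ∈ Finset.range K, z ^ (2*k) * ((k:ℝ)+1) ^ r / (2*k).factorial
          ≤ (2:ℝ) ^ (z/2) * Real.exp (z/2) := by
        have hterm : ∀ k ∈ Finset.range K,
            z ^ (2*k) * ((k:ℝ)+1) ^ r / (2*k).factorial
            ≤ (2:ℝ) ^ (z/2) * ((z/2) ^ (2*k) / (2*k).factorial) := by
          intro k hk
          rw [Finset.mem_range] at hk
          have hk2 : ((2*k : ℕ):ℝ) ≤ z/2 := by
            have h2 : ((k:ℝ)+1) ≤ K := by exact_mod_cast hk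
            have h3 : (K:ℝ) < z/4 + 1 := Nat.ceil_lt_add_one (by positivity)
            push_cast
            linarith
          have h4 : ((k:ℝ)+1) ^ r ≤ 1 :=
            Real.rpow_le_one_of_one_le_of_nonpos (by linarith [Nat.cast_nonneg (α := ℝ) k]) hr.le
          have h5 : (2:ℝ) ^ ((2*k : ℕ):ℝ) ≤ (2:ℝ) ^ (z/2) :=
            Real.rpow_le_rpow_of_exponent_le (by norm_num) hk2
          rw [Real.rpow_natCast] at h5
          have e1 : z ^ (2*k) = (2:ℝ) ^ (2*k) * (z/2) ^ (2*k) := by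
            rw [← mul_pow]; congr 1; ring
          calc z ^ (2*k) * ((k:ℝ)+1) ^ r / (2*k).factorial
              ≤ z ^ (2*k) * 1 / (2*k).factorial := by
                apply div_le_div_of_nonneg_right ?_ (by positivity)
                exact mul_le_mul_of_nonneg_left h4 (by positivity)
            _ = (2:ℝ) ^ (2*k) * ((z/2) ^ (2*k) / (2*k).factorial) := by rw [e1]; ring
            _ ≤ (2:ℝ) ^ (z/2) * ((z/2) ^ (2*k) / (2*k).factorial) :=
                mul_le_mul_of_nonneg_right h5 (by positivity)
        calc ∑ k ∈ Finset.range K, z ^ (2*k) * ((k:ℝ)+1) ^ r / (2*k).factorial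
            ≤ ∑ k ∈ Finset.range K, (2:ℝ) ^ (z/2) * ((z/2) ^ (2*k) / (2*k).factorial) :=
              Finset.sum_le_sum hterm
          _ = (2:ℝ) ^ (z/2) * ∑ k ∈ Finset.range K, (z/2) ^ (2*k) / (2*k).factorial := by
              rw [Finset.mul_sum]
          _ ≤ (2:ℝ) ^ (z/2) * Real.exp (z/2) := by
              apply mul_le_mul_of_nonneg_left ?_ (by positivity)
              exact le_trans (Summable.sum_le_tsum (Finset.range K) (fun k _ => by positivity)
                (summable_even (z/2))) (even_tsum_le_exp (by positivity))
      have hXr : (2:ℝ) ^ (z/2) * Real.exp (z/2) * (1+z) ^ (-r)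
          ≤ C₁ * Real.exp (1/8) * Real.exp z := by
        have h6 : (1+z) ^ (-r) ≤ C₁ * Real.exp (1/8 * (1+z)) := hC₁b (1+z) (by linarith)
        have h7 : (2:ℝ) ^ (z/2) = Real.exp (Real.log 2 * (z/2)) := by
          rw [Real.rpow_def_of_pos (by norm_num)]
        have hl2 := Real.log_two_lt_d9
        have hl2' := Real.log_two_gt_d9
        calc (2:ℝ) ^ (z/2) * Real.exp (z/2) * (1+z) ^ (-r)
            ≤ (2:ℝ) ^ (z/2) * Real.exp (z/2) * (C₁ * Real.exp (1/8 * (1+z))) := by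
              apply mul_le_mul_of_nonneg_left h6 (by positivity)
          _ = C₁ * (Real.exp (Real.log 2 * (z/2) + z/2) * Real.exp (1/8 * (1+z))) := by
              rw [h7, ← Real.exp_add]; ring
          _ = C₁ * Real.exp (Real.log 2 * (z/2) + z/2 + 1/8 * (1+z)) := by
              rw [← Real.exp_add]
          _ ≤ C₁ * Real.exp (1/8 + z) := by
              apply mul_le_mul_of_nonneg_left ?_ hC₁.le
              rw [Real.exp_le_exp]
              nlinarith
          _ = C₁ * Real.exp (1/8) * Real.exp z := by rw [Real.exp_add]; ring
      have hid : (1+z) ^ (-r) * (1+z) ^ r = 1 := by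
        rw [← Real.rpow_add h1z]
        norm_num
      calc ∑ k ∈ Finset.range K, z ^ (2*k) * ((k:ℝ)+1) ^ r / (2*k).factorial
          ≤ (2:ℝ) ^ (z/2) * Real.exp (z/2) := hX
        _ = (2:ℝ) ^ (z/2) * Real.exp (z/2) * ((1+z) ^ (-r) * (1+z) ^ r) := by
            rw [hid, mul_one]
        _ = ((2:ℝ) ^ (z/2) * Real.exp (z/2) * (1+z) ^ (-r)) * (1+z) ^ r := by ring
        _ ≤ C₁ * Real.exp (1/8) * Real.exp z * (1+z) ^ r :=
            mul_le_mul_of_nonneg_right hXr hrp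
    have tail : ∑' j : ℕ, z ^ (2*(j+K)) * (((j+K : ℕ):ℝ)+1) ^ r / (2*(j+K)).factorial
        ≤ (8:ℝ) ^ (-r) * (1+z) ^ r * Real.exp z := by
      have hterm : ∀ j : ℕ,
          z ^ (2*(j+K)) * (((j+K : ℕ):ℝ)+1) ^ r / (2*(j+K)).factorial
          ≤ (8:ℝ) ^ (-r) * (1+z) ^ r * (z ^ (2*(j+K)) / (2*(j+K)).factorial) := by
        intro j
        have h8 : (1+z)/8 ≤ ((j+K : ℕ):ℝ) + 1 := by
          have h7 : z/4 ≤ (K:ℝ) := Nat.le_ceil _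
          have h8' : (K:ℝ) ≤ ((j+K : ℕ):ℝ) := by exact_mod_cast Nat.le_add_left K j
          have h9 : (1+z)/8 ≤ z/4 := by linarith
          linarith [Nat.cast_nonneg (α := ℝ) (j+K)]
        have h10 : (((j+K : ℕ):ℝ)+1) ^ r ≤ ((1+z)/8) ^ r :=
          Real.rpow_le_rpow_of_nonpos (by positivity) h8 hr.le
        have h11 : ((1+z)/8 : ℝ) ^ r = (1+z) ^ r / (8:ℝ) ^ r :=
          Real.div_rpow h1z.le (by norm_num : (0:ℝ) ≤ 8) r
        have h12 : (1+z) ^ r / (8:ℝ) ^ r = (8:ℝ) ^ (-r) * (1+z) ^ r := by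
          rw [Real.rpow_neg (by norm_num)]
          ring
        calc z ^ (2*(j+K)) * (((j+K : ℕ):ℝ)+1) ^ r / (2*(j+K)).factorial
            ≤ z ^ (2*(j+K)) * ((8:ℝ) ^ (-r) * (1+z) ^ r) / (2*(j+K)).factorial := by
              apply div_le_div_of_nonneg_right ?_ (by positivity)
              apply mul_le_mul_of_nonneg_left ?_ (by positivity)
              rw [← h12, ← h11]
              exact h10
          _ = (8:ℝ) ^ (-r) * (1+z) ^ r * (z ^ (2*(j+K)) / (2*(j+K)).factorial) := by ring
      calc ∑' j : ℕ, z ^ (2*(j+K)) * (((j+K : ℕ):ℝ)+1) ^ r / (2*(j+K)).factorial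
          ≤ ∑' j : ℕ, (8:ℝ) ^ (-r) * (1+z) ^ r
              * (z ^ (2*(j+K)) / (2*(j+K)).factorial) :=
            Summable.tsum_le_tsum hterm (summable_shifted z r hz0.le K)
              ((summable_even_shifted z K).mul_left _)
        _ = (8:ℝ) ^ (-r) * (1+z) ^ r
              * ∑' j : ℕ, z ^ (2*(j+K)) / (2*(j+K)).factorial := tsum_mul_left
        _ ≤ (8:ℝ) ^ (-r) * (1+z) ^ r * Real.exp z := by
            apply mul_le_mul_of_nonneg_left (shifted_even_tsum_le hz0.le K) (by positivity)
    calc _ ≤ C₁ * Real.exp (1/8) * Real.exp z * (1+z) ^ r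
          + (8:ℝ) ^ (-r) * (1+z) ^ r * Real.exp z := add_le_add head tail
      _ = (C₁ * Real.exp (1/8) + (8:ℝ) ^ (-r)) * (Real.exp z * (1+z) ^ r) := by ring
set_option maxHeartbeats 1000000 in
lemma lower_est (r : ℝ) : ∃ c : ℝ, 0 < c ∧ ∀ z : ℝ, 1 ≤ z →
    c * (Real.exp z * (1+z) ^ r)
      ≤ ∑' k : ℕ, z ^ (2*k) * ((k:ℝ)+1) ^ r / (2*k).factorial := by
  obtain ⟨A, hA, hAb⟩ := factorial_upper
  have hfour : (0:ℝ) < (4:ℝ) ^ (-|r|) := Real.rpow_pos_of_pos (by norm_num) _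
  refine ⟨(4:ℝ) ^ (-|r|) / (Real.sqrt 2 * Real.sqrt 5 * A * Real.exp 16), by positivity,
    fun z hz => ?_⟩
  have hz0 : (0:ℝ) < z := lt_of_lt_of_le one_pos hz
  have h1z : (0:ℝ) < 1 + z := by linarith
  have hrp : (0:ℝ) < (1+z) ^ r := Real.rpow_pos_of_pos h1z r
  have hsqz1 : (1:ℝ) ≤ Real.sqrt z := Real.one_le_sqrt.mpr hz
  have hsqzz : Real.sqrt z ≤ z := (Real.sqrt_le_left hz0.le).mpr (by nlinarith)
  set k₀ := ⌈z/2⌉₊ with hk₀_def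
  set m := ⌈Real.sqrt z⌉₊ with hm_def
  have hk₀l : z/2 ≤ (k₀:ℝ) := Nat.le_ceil _
  have hk₀u : (k₀:ℝ) < z/2 + 1 := Nat.ceil_lt_add_one (by positivity)
  have hml : Real.sqrt z ≤ (m:ℝ) := Nat.le_ceil _
  have hmu : (m:ℝ) < Real.sqrt z + 1 := Nat.ceil_lt_add_one (by positivity)
  set b : ℝ := (4:ℝ) ^ (-|r|) * (1+z) ^ r
      * (Real.exp z / (A * Real.exp 16 * (Real.sqrt 5 * Real.sqrt (1+z)))) with hb_def
  have hb0 : 0 < b := by positivity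
  -- each term in the window dominates b
  have hwin : ∀ k ∈ Finset.Ico k₀ (k₀ + m),
      b ≤ z ^ (2*k) * ((k:ℝ)+1) ^ r / (2*k).factorial := by
    intro k hk
    rw [Finset.mem_Ico] at hk
    have hkl : (k₀:ℝ) ≤ (k:ℝ) := by exact_mod_cast hk.1
    have hku : (k:ℝ) + 1 ≤ (k₀:ℝ) + (m:ℝ) := by
      have : k + 1 ≤ k₀ + m := hk.2
      exact_mod_cast this
    have hn1 : 1 ≤ 2*k := by
      have h1 : (1:ℝ) ≤ (k:ℝ) + 1/2 := by linarith
      have h2 : (1:ℝ) ≤ 2*(k:ℝ) := by linarith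
      exact_mod_cast h2
    have hnz : z ≤ ((2*k : ℕ):ℝ) := by push_cast; linarith
    have hnu : ((2*k : ℕ):ℝ) ≤ z + 4 * Real.sqrt z := by push_cast; linarith
    have hn5 : ((2*k : ℕ):ℝ) ≤ 5 * (1 + z) := by
      have : 4 * Real.sqrt z ≤ 4 * z := by linarith
      push_cast at hnu ⊢
      linarith
    set n := 2*k with hn_def
    have hnpos : (0:ℝ) < (n:ℝ) := by
      have : (1:ℝ) ≤ (n:ℝ) := by exact_mod_cast hn1
      linarith
    -- exponential lower bound for the central term
    have claim1 : Real.exp (z - 16) ≤ z ^ n * Real.exp n / (n:ℝ) ^ n := by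
      have hlog : Real.log ((n:ℝ)/z) ≤ ((n:ℝ) - z)/z := by
        have h1 := Real.log_le_sub_one_of_pos (show (0:ℝ) < (n:ℝ)/z by positivity)
        have h2 : (n:ℝ)/z - 1 = ((n:ℝ) - z)/z := by field_simp
        linarith
      have h2 : (n:ℝ) * Real.log ((n:ℝ)/z) ≤ (n:ℝ) * (((n:ℝ) - z)/z) :=
        mul_le_mul_of_nonneg_left hlog hnpos.le
      have h3 : (n:ℝ) * (((n:ℝ) - z)/z) = ((n:ℝ) - z) + ((n:ℝ) - z)^2/z := by
        field_simp; ring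
      have h4 : ((n:ℝ) - z)^2 ≤ 16 * z := by
        have hd0 : (0:ℝ) ≤ (n:ℝ) - z := by linarith
        have hd1 : (n:ℝ) - z ≤ 4 * Real.sqrt z := by linarith
        have := Real.sq_sqrt hz0.le
        nlinarith [Real.sqrt_nonneg z]
      have h5 : (n:ℝ) * Real.log ((n:ℝ)/z) ≤ (n:ℝ) - z + 16 := by
        have h6 : ((n:ℝ) - z)^2/z ≤ 16 := by
          rw [div_le_iff₀ hz0]; nlinarith
        rw [h3] at h2
        linarith
      have hflip : Real.log (z/(n:ℝ)) = - Real.log ((n:ℝ)/z) := by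
        rw [← Real.log_inv, inv_div]
      have h7 : z - (n:ℝ) - 16 ≤ (n:ℝ) * Real.log (z/(n:ℝ)) := by
        rw [hflip]; nlinarith
      have e : Real.exp ((n:ℝ) * Real.log (z/(n:ℝ))) = (z/(n:ℝ)) ^ n := by
        rw [Real.exp_nat_mul, Real.exp_log (by positivity)]
      calc Real.exp (z - 16) = Real.exp (z - (n:ℝ) - 16) * Real.exp (n:ℝ) := by
            rw [← Real.exp_add]; ring_nf
        _ ≤ Real.exp ((n:ℝ) * Real.log (z/(n:ℝ))) * Real.exp (n:ℝ) :=
            mul_le_mul_of_nonneg_right (Real.exp_le_exp.mpr h7) (Real.exp_pos _).le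
        _ = (z/(n:ℝ)) ^ n * Real.exp (n:ℝ) := by rw [e]
        _ = z ^ n * Real.exp n / (n:ℝ) ^ n := by
            rw [div_pow]; ring
    -- factorial upper bound
    have hfact : (n.factorial : ℝ) ≤ A * Real.sqrt n * (n:ℝ) ^ n / Real.exp n := hAb n hn1
    have hfd : (0:ℝ) < A * Real.sqrt n * (n:ℝ) ^ n / Real.exp n := by positivity
    have hterm1 : Real.exp z / (A * Real.exp 16 * (Real.sqrt 5 * Real.sqrt (1+z)))
        ≤ z ^ n / n.factorial := by
      have s1 : z ^ n / (n.factorial : ℝ) ≥ z ^ n / (A * Real.sqrt n * (n:ℝ) ^ n / Real.exp n) :=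
        div_le_div_of_nonneg_left (by positivity) (by positivity) hfact
      have s2 : z ^ n / (A * Real.sqrt n * (n:ℝ) ^ n / Real.exp n)
          = (z ^ n * Real.exp n / (n:ℝ) ^ n) / (A * Real.sqrt n) := by
        field_simp
      have s3 : (z ^ n * Real.exp n / (n:ℝ) ^ n) / (A * Real.sqrt n)
          ≥ Real.exp (z - 16) / (A * Real.sqrt n) :=
        div_le_div_of_nonneg_right claim1 (by positivity)
      have s4 : Real.sqrt (n:ℝ) ≤ Real.sqrt 5 * Real.sqrt (1+z) := by
        rw [← Real.sqrt_mul (by norm_num : (0:ℝ) ≤ 5)]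
        exact Real.sqrt_le_sqrt hn5
      have s5 : Real.exp (z - 16) / (A * Real.sqrt n)
          ≥ Real.exp (z - 16) / (A * (Real.sqrt 5 * Real.sqrt (1+z))) := by
        apply div_le_div_of_nonneg_left (Real.exp_pos _).le (by positivity)
        exact mul_le_mul_of_nonneg_left s4 hA.le
      have s6 : Real.exp (z - 16) / (A * (Real.sqrt 5 * Real.sqrt (1+z)))
          = Real.exp z / (A * Real.exp 16 * (Real.sqrt 5 * Real.sqrt (1+z))) := by
        rw [Real.exp_sub]
        field_simp
      linarith
    -- rpow comparison
    have hcomp : (4:ℝ) ^ (-|r|) * (1+z) ^ r ≤ ((k:ℝ)+1) ^ r := by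
      have hc1 : (1+z) ≤ 4 * ((k:ℝ)+1) := by linarith
      have hc2 : ((k:ℝ)+1) ≤ 4 * (1+z) := by linarith [hsqzz, hmu, hk₀u]
      have := rpow_ratio_le (r := r) (M := 4) (a := (k:ℝ)+1) (b := 1+z)
        (by norm_num) (by positivity) h1z hc1 hc2
      have hinv : (4:ℝ) ^ (-|r|) * (4:ℝ) ^ (|r|) = 1 := by
        rw [← Real.rpow_add (by norm_num)]
        norm_num
      calc (4:ℝ) ^ (-|r|) * (1+z) ^ r ≤ (4:ℝ) ^ (-|r|) * ((4:ℝ) ^ |r| * ((k:ℝ)+1) ^ r) :=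
            mul_le_mul_of_nonneg_left this hfour.le
        _ = ((k:ℝ)+1) ^ r := by rw [← mul_assoc, hinv, one_mul]
    have hkr : (0:ℝ) < ((k:ℝ)+1) ^ r := Real.rpow_pos_of_pos (by positivity) r
    calc b = ((4:ℝ) ^ (-|r|) * (1+z) ^ r)
          * (Real.exp z / (A * Real.exp 16 * (Real.sqrt 5 * Real.sqrt (1+z)))) := by
          rw [hb_def]
      _ ≤ ((k:ℝ)+1) ^ r * (z ^ n / n.factorial) := by
          apply mul_le_mul hcomp hterm1 (by positivity) hkr.le
      _ = z ^ (2*k) * ((k:ℝ)+1) ^ r / (2*k).factorial := by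
          rw [hn_def]; ring
  -- sum over the window
  have hsum := summable_rpow_even (x := z) r hz0.le
  have hcard : (Finset.Ico k₀ (k₀ + m)).card = m := by
    rw [Nat.card_Ico]; omega
  have step3 : (m:ℝ) * b ≤ ∑ k ∈ Finset.Ico k₀ (k₀ + m),
      z ^ (2*k) * ((k:ℝ)+1) ^ r / (2*k).factorial := by
    have := Finset.card_nsmul_le_sum (Finset.Ico k₀ (k₀ + m))
      (fun k => z ^ (2*k) * ((k:ℝ)+1) ^ r / (2*k).factorial) b hwin
    rwa [hcard, nsmul_eq_mul] at this
  have step4 : ∑ k ∈ Finset.Ico k₀ (k₀ + m),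
      z ^ (2*k) * ((k:ℝ)+1) ^ r / (2*k).factorial
      ≤ ∑' k : ℕ, z ^ (2*k) * ((k:ℝ)+1) ^ r / (2*k).factorial := by
    apply Summable.sum_le_tsum _ (fun k _ => ?_) hsum
    have : (0:ℝ) < ((k:ℝ)+1) ^ r := Real.rpow_pos_of_pos (by positivity) r
    positivity
  have step5 : (4:ℝ) ^ (-|r|) / (Real.sqrt 2 * Real.sqrt 5 * A * Real.exp 16)
      * (Real.exp z * (1+z) ^ r) ≤ (m:ℝ) * b := by
    have h1 : Real.sqrt (1+z) ≤ Real.sqrt 2 * Real.sqrt z := by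
      rw [← Real.sqrt_mul (by norm_num : (0:ℝ) ≤ 2)]
      exact Real.sqrt_le_sqrt (by linarith)
    have hsq1z : (0:ℝ) < Real.sqrt (1+z) := Real.sqrt_pos.mpr h1z
    have h2 : Real.sqrt (1+z) / Real.sqrt 2 ≤ (m:ℝ) := by
      rw [div_le_iff₀ (by positivity : (0:ℝ) < Real.sqrt 2)]
      calc Real.sqrt (1+z) ≤ Real.sqrt 2 * Real.sqrt z := h1
        _ ≤ Real.sqrt 2 * (m:ℝ) := by
            apply mul_le_mul_of_nonneg_left hml (Real.sqrt_nonneg 2)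
        _ = (m:ℝ) * Real.sqrt 2 := by ring
    have h3 : (4:ℝ) ^ (-|r|) / (Real.sqrt 2 * Real.sqrt 5 * A * Real.exp 16)
        * (Real.exp z * (1+z) ^ r) = (Real.sqrt (1+z) / Real.sqrt 2) * b := by
      rw [hb_def]
      field_simp
    rw [h3]
    exact mul_le_mul_of_nonneg_right h2 hb0.le
  linarith
lemma main_estimate (r : ℝ) : ∃ C₁ C₂ : ℝ, 0 < C₁ ∧ 0 < C₂ ∧ ∀ z : ℝ, 0 < z →
    C₁ * (Real.exp z * (1+z) ^ r) ≤ ∑' k : ℕ, z ^ (2*k) * ((k:ℝ)+1) ^ r / (2*k).factorial ∧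
    ∑' k : ℕ, z ^ (2*k) * ((k:ℝ)+1) ^ r / (2*k).factorial ≤ C₂ * (Real.exp z * (1+z) ^ r) := by
  obtain ⟨c, hc, hcb⟩ := lower_est r
  obtain ⟨C, hC, hCb⟩ := upper_est r
  set D := ∑' k : ℕ, (1:ℝ) ^ (2*k) * ((k:ℝ)+1) ^ r / (2*k).factorial with hD_def
  have htwo : (0:ℝ) < (2:ℝ) ^ |r| := Real.rpow_pos_of_pos (by norm_num) _
  have hone : ∀ z : ℝ, 0 < z → (0:ℝ) < (1+z) ^ r :=
    fun z hz => Real.rpow_pos_of_pos (by linarith) r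
  have hfirst : ∀ z : ℝ, 0 ≤ z →
      (1:ℝ) ≤ ∑' k : ℕ, z ^ (2*k) * ((k:ℝ)+1) ^ r / (2*k).factorial := by
    intro z hz
    have h0 : ∑ k ∈ ({0} : Finset ℕ), z ^ (2*k) * ((k:ℝ)+1) ^ r / (2*k).factorial = 1 := by
      simp [Real.one_rpow]
    have hst : ∑ k ∈ ({0} : Finset ℕ), z ^ (2*k) * ((k:ℝ)+1) ^ r / (2*k).factorial
        ≤ ∑' k : ℕ, z ^ (2*k) * ((k:ℝ)+1) ^ r / (2*k).factorial := by
      apply Summable.sum_le_tsum _ (fun k _ => ?_) (summable_rpow_even r hz)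
      have : (0:ℝ) < ((k:ℝ)+1) ^ r := Real.rpow_pos_of_pos (by positivity) r
      positivity
    linarith
  have hD1 : (1:ℝ) ≤ D := hfirst 1 (by norm_num)
  refine ⟨min c (Real.exp 1 * (2:ℝ) ^ |r|)⁻¹, max C (D * (2:ℝ) ^ |r|),
    lt_min hc (by positivity), lt_of_lt_of_le hC (le_max_left _ _), fun z hz => ?_⟩
  have h1z : (0:ℝ) < 1 + z := by linarith
  have hEpos : (0:ℝ) ≤ Real.exp z * (1+z) ^ r := by positivity
  rcases le_or_gt 1 z with hz1 | hz1
  · constructor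
    · exact le_trans (mul_le_mul_of_nonneg_right (min_le_left _ _) hEpos) (hcb z hz1)
    · exact le_trans (hCb z hz1) (mul_le_mul_of_nonneg_right (le_max_left _ _) hEpos)
  · -- 0 < z < 1
    have hup : (1+z) ^ r ≤ (2:ℝ) ^ |r| := by
      have := rpow_ratio_le (r := r) (M := 2) (a := 1) (b := 1+z)
        (by norm_num) one_pos h1z (by linarith) (by linarith)
      simpa [Real.one_rpow] using this
    have hdn : (1:ℝ) ≤ (2:ℝ) ^ |r| * (1+z) ^ r := by
      have := rpow_ratio_le (r := r) (M := 2) (a := 1+z) (b := 1)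
        (by norm_num) h1z one_pos (by linarith) (by linarith)
      simpa [Real.one_rpow] using this
    constructor
    · have h1 : Real.exp z * (1+z) ^ r ≤ Real.exp 1 * (2:ℝ) ^ |r| := by
        apply mul_le_mul (Real.exp_le_exp.mpr hz1.le) hup (hone z hz).le (Real.exp_pos 1).le
      calc min c (Real.exp 1 * (2:ℝ) ^ |r|)⁻¹ * (Real.exp z * (1+z) ^ r)
          ≤ (Real.exp 1 * (2:ℝ) ^ |r|)⁻¹ * (Real.exp 1 * (2:ℝ) ^ |r|) :=
            mul_le_mul (min_le_right _ _) h1 hEpos (by positivity)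
        _ = 1 := inv_mul_cancel₀ (by positivity)
        _ ≤ _ := hfirst z hz.le
    · have h2 : ∑' k : ℕ, z ^ (2*k) * ((k:ℝ)+1) ^ r / (2*k).factorial ≤ D := by
        apply Summable.tsum_le_tsum (fun k => ?_) (summable_rpow_even r hz.le)
          (summable_rpow_even r (by norm_num))
        apply div_le_div_of_nonneg_right ?_ (by positivity)
        apply mul_le_mul_of_nonneg_right ?_ (Real.rpow_pos_of_pos (by positivity) r).le
        calc z ^ (2*k) ≤ 1 ^ (2*k) := pow_le_pow_left₀ hz.le hz1.le _
          _ = (1:ℝ) ^ (2*k) := rfl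
      have h3 : D ≤ D * (2:ℝ) ^ |r| * (Real.exp z * (1+z) ^ r) := by
        have h4 : (1:ℝ) ≤ (2:ℝ) ^ |r| * (Real.exp z * (1+z) ^ r) := by
          have h5 : (1:ℝ) ≤ Real.exp z := Real.one_le_exp hz.le
          nlinarith [(hone z hz).le, htwo.le]
        nth_rewrite 1 [← mul_one D]
        calc D * 1 ≤ D * ((2:ℝ) ^ |r| * (Real.exp z * (1+z) ^ r)) :=
              mul_le_mul_of_nonneg_left h4 (by linarith)
          _ = D * (2:ℝ) ^ |r| * (Real.exp z * (1+z) ^ r) := by ring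
      calc _ ≤ D := h2
        _ ≤ D * (2:ℝ) ^ |r| * (Real.exp z * (1+z) ^ r) := h3
        _ ≤ max C (D * (2:ℝ) ^ |r|) * (Real.exp z * (1+z) ^ r) :=
            mul_le_mul_of_nonneg_right (le_max_right _ _) hEpos

/-- Modified Bessel function of the first kind. -/
noncomputable def besselI (μ z : ℝ) : ℝ :=
  ∑' k : ℕ, (z / 2) ^ (μ + 2 * (k : ℝ)) / ((Nat.factorial k : ℝ) * Real.Gamma ((k : ℝ) + μ + 1))

theorem besselI_two_sided (μ : ℝ) (hμ : -1 < μ) :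
    ∃ c₁ > (0 : ℝ), ∃ c₂ > (0 : ℝ), ∀ z > (0 : ℝ),
      c₁ * (z ^ μ * Real.exp z / (1 + z) ^ (μ + 1/2)) ≤ besselI μ z ∧
      besselI μ z ≤ c₂ * (z ^ μ * Real.exp z / (1 + z) ^ (μ + 1/2)) := by
  obtain ⟨r₁, r₂, hr₁, hr₂, hrb⟩ := term_compare hμ
  obtain ⟨C₁, C₂, hC₁, hC₂, hM⟩ := main_estimate (-(μ+1/2))
  have h2 : (0:ℝ) < (2:ℝ) ^ (-μ) := Real.rpow_pos_of_pos (by norm_num) _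
  refine ⟨(2:ℝ) ^ (-μ) * (r₁ * C₁), by positivity, (2:ℝ) ^ (-μ) * (r₂ * C₂), by positivity,
    fun z hz => ?_⟩
  have hz2 : (0:ℝ) < z/2 := by linarith
  have h1z : (0:ℝ) < 1 + z := by linarith
  -- besselI as a power times a normalized series
  have hbes : besselI μ z = (z/2) ^ μ
      * ∑' k : ℕ, (z^2/4) ^ k / (k.factorial * Real.Gamma ((k:ℝ) + μ + 1)) := by
    rw [besselI, ← tsum_mul_left]
    congr 1 with k
    have e1 : (z/2 : ℝ) ^ (μ + 2*(k:ℝ)) = (z/2) ^ μ * (z^2/4) ^ k := by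
      rw [Real.rpow_add hz2]
      congr 1
      have e2 : (2*(k:ℝ)) = ((2*k : ℕ):ℝ) := by push_cast; ring
      rw [e2, Real.rpow_natCast, pow_mul]
      congr 1
      rw [div_pow]
      norm_num
    rw [e1, mul_div_assoc]
  -- termwise comparison with the model series
  have hTsum := summable_rpow_even (x := z) (-(μ+1/2)) hz.le
  have hterm : ∀ k : ℕ,
      r₁ * (z ^ (2*k) * ((k:ℝ)+1) ^ (-(μ+1/2)) / (2*k).factorial)
        ≤ (z^2/4) ^ k / (k.factorial * Real.Gamma ((k:ℝ) + μ + 1)) ∧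
      (z^2/4) ^ k / (k.factorial * Real.Gamma ((k:ℝ) + μ + 1))
        ≤ r₂ * (z ^ (2*k) * ((k:ℝ)+1) ^ (-(μ+1/2)) / (2*k).factorial) := by
    intro k
    have hq : (0:ℝ) ≤ (z^2/4) ^ k := by positivity
    have hzz : (z^2/4 : ℝ) ^ k * (4:ℝ) ^ k = z ^ (2*k) := by
      rw [← mul_pow, div_mul_cancel₀ _ (by norm_num : (4:ℝ) ≠ 0), pow_mul]
    have hb := hrb k
    constructor
    · have := mul_le_mul_of_nonneg_left hb.1 hq
      rw [div_eq_mul_inv ((z^2/4 : ℝ) ^ k)]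
      calc r₁ * (z ^ (2*k) * ((k:ℝ)+1) ^ (-(μ+1/2)) / (2*k).factorial)
          = (z^2/4) ^ k * (r₁ * ((4:ℝ)^k * ((k:ℝ)+1) ^ (-(μ+1/2)) / (2*k).factorial)) := by
            rw [← hzz]; ring
        _ ≤ (z^2/4) ^ k * (k.factorial * Real.Gamma ((k:ℝ)+μ+1))⁻¹ := this
    · have := mul_le_mul_of_nonneg_left hb.2 hq
      rw [div_eq_mul_inv ((z^2/4 : ℝ) ^ k)]
      calc (z^2/4 : ℝ) ^ k * (k.factorial * Real.Gamma ((k:ℝ)+μ+1))⁻¹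
          ≤ (z^2/4) ^ k * (r₂ * ((4:ℝ)^k * ((k:ℝ)+1) ^ (-(μ+1/2)) / (2*k).factorial)) := this
        _ = r₂ * (z ^ (2*k) * ((k:ℝ)+1) ^ (-(μ+1/2)) / (2*k).factorial) := by
            rw [← hzz]; ring
  have hSsum : Summable (fun k : ℕ =>
      (z^2/4) ^ k / (k.factorial * Real.Gamma ((k:ℝ) + μ + 1))) := by
    apply Summable.of_nonneg_of_le (fun k => ?_) (fun k => (hterm k).2) (hTsum.mul_left r₂)
    have hΓ : (0:ℝ) < Real.Gamma ((k:ℝ) + μ + 1) :=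
      Real.Gamma_pos_of_pos (by have := Nat.cast_nonneg (α := ℝ) k; linarith)
    have hfac : (0:ℝ) < (k.factorial : ℝ) := by positivity
    positivity
  have hSl : r₁ * (∑' k : ℕ, z ^ (2*k) * ((k:ℝ)+1) ^ (-(μ+1/2)) / (2*k).factorial)
      ≤ ∑' k : ℕ, (z^2/4) ^ k / (k.factorial * Real.Gamma ((k:ℝ) + μ + 1)) := by
    rw [← tsum_mul_left]
    exact Summable.tsum_le_tsum (fun k => (hterm k).1) (hTsum.mul_left r₁) hSsum
  have hSu : ∑' k : ℕ, (z^2/4) ^ k / (k.factorial * Real.Gamma ((k:ℝ) + μ + 1))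
      ≤ r₂ * ∑' k : ℕ, z ^ (2*k) * ((k:ℝ)+1) ^ (-(μ+1/2)) / (2*k).factorial := by
    rw [← tsum_mul_left]
    exact Summable.tsum_le_tsum (fun k => (hterm k).2) hSsum (hTsum.mul_left r₂)
  obtain ⟨hMl, hMu⟩ := hM z hz
  -- rewrite target shapes
  have e2 : (z/2 : ℝ) ^ μ = z ^ μ * (2:ℝ) ^ (-μ) := by
    rw [Real.div_rpow hz.le (by norm_num : (0:ℝ) ≤ 2) μ, Real.rpow_neg (by norm_num)]
    ring
  have e3 : ((1+z : ℝ)) ^ (-(μ+1/2)) = ((1+z) ^ (μ+1/2))⁻¹ := Real.rpow_neg h1z.le _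
  have hzr : (0:ℝ) < (z/2 : ℝ) ^ μ := Real.rpow_pos_of_pos hz2 μ
  constructor
  · calc (2:ℝ) ^ (-μ) * (r₁ * C₁) * (z ^ μ * Real.exp z / (1 + z) ^ (μ + 1/2))
        = (z/2) ^ μ * (r₁ * (C₁ * (Real.exp z * (1+z) ^ (-(μ+1/2))))) := by
          rw [e2, e3]; ring
      _ ≤ (z/2) ^ μ * (r₁ * (∑' k : ℕ, z ^ (2*k) * ((k:ℝ)+1) ^ (-(μ+1/2)) / (2*k).factorial)) := by
          apply mul_le_mul_of_nonneg_left ?_ hzr.le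
          exact mul_le_mul_of_nonneg_left hMl hr₁.le
      _ ≤ (z/2) ^ μ * ∑' k : ℕ, (z^2/4) ^ k / (k.factorial * Real.Gamma ((k:ℝ) + μ + 1)) :=
          mul_le_mul_of_nonneg_left hSl hzr.le
      _ = besselI μ z := hbes.symm
  · calc besselI μ z
        = (z/2) ^ μ * ∑' k : ℕ, (z^2/4) ^ k / (k.factorial * Real.Gamma ((k:ℝ) + μ + 1)) := hbes
      _ ≤ (z/2) ^ μ * (r₂ * ∑' k : ℕ, z ^ (2*k) * ((k:ℝ)+1) ^ (-(μ+1/2)) / (2*k).factorial) :=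
          mul_le_mul_of_nonneg_left hSu hzr.le
      _ ≤ (z/2) ^ μ * (r₂ * (C₂ * (Real.exp z * (1+z) ^ (-(μ+1/2))))) := by
          apply mul_le_mul_of_nonneg_left ?_ hzr.le
          exact mul_le_mul_of_nonneg_left hMu hr₂.le
      _ = (2:ℝ) ^ (-μ) * (r₂ * C₂) * (z ^ μ * Real.exp z / (1 + z) ^ (μ + 1/2)) := by
          rw [e2, e3]; ring
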